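/- For every integer k ≥ 3 with k ≡ 0 (mod 3), there exists a constant c (depending only on k) such that for every n, C⁽³⁾_k(n) ≤ c · n^{2k/3 + 1}. -/

import Mathlib

/-- The number of `k`-chains spanned by a finite point set `P` in `ℝ^d` with respect to a
sequence of distances `δ : Fin k → ℝ`: tuples `(p 0, …, p k)` of pairwise distinct points of
`P` with `dist (p j) (p (j+1)) = δ j` for all `j`. -/
noncomputable def chainCount (d k : ℕ) (P : Finset (EuclideanSpace ℝ (Fin d)))
    (δ : Fin k → ℝ) : ℕ :=
  Set.ncard {p : Fin (k + 1) → EuclideanSpace ℝ (Fin d) |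
    (∀ i, p i ∈ P) ∧ Function.Injective p ∧
    ∀ j : Fin k, dist (p j.castSucc) (p j.succ) = δ j}

/-- `maxChains d k n` is the maximum number of `k`-chains spanned by a set of `n` points in
`ℝ^d`, over all sequences of positive distances. -/
noncomputable def maxChains (d k n : ℕ) : ℕ :=
  sSup {m | ∃ (P : Finset (EuclideanSpace ℝ (Fin d))) (δ : Fin k → ℝ),
    P.card = n ∧ (∀ j, 0 < δ j) ∧ m = chainCount d k P δ}

noncomputable section
open scoped RealInnerProductSpace Classical

abbrev E3 : Type := EuclideanSpace ℝ (Fin 3)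


/-- Inner product orthogonality from two equal-distance conditions. -/
lemma inner_diff_zero (z z' w w' : E3) (h1 : dist z w = dist z w')
    (h2 : dist z' w = dist z' w') : ⟪w - w', z - z'⟫ = 0 := by
  have e1 : ‖z - w‖ ^ 2 = ‖z - w'‖ ^ 2 := by rw [← dist_eq_norm, ← dist_eq_norm, h1]
  have e2 : ‖z' - w‖ ^ 2 = ‖z' - w'‖ ^ 2 := by rw [← dist_eq_norm, ← dist_eq_norm, h2]
  rw [norm_sub_sq_real, norm_sub_sq_real] at e1 e2
  simp only [inner_sub_left, inner_sub_right]
  have c1 := real_inner_comm z w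
  have c2 := real_inner_comm z w'
  have c3 := real_inner_comm z' w
  have c4 := real_inner_comm z' w'
  linarith

/-- Three pairwise distinct points equidistant from `b`, with dependent difference
vectors, is impossible. -/
lemma equidist_not_dep (b p q r : E3) (hpq : p ≠ q) (hpr : p ≠ r) (hqr : q ≠ r)
    (h1 : dist b p = dist b q) (h2 : dist b p = dist b r)
    (hdep : ¬ LinearIndependent ℝ ![p - q, p - r]) : False := by
  rw [LinearIndependent.pair_iff] at hdep
  push_neg at hdep
  obtain ⟨s, t, hst, hne⟩ := hdep
  have hu : p - q ≠ 0 := sub_ne_zero_of_ne hpq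
  have hv : p - r ≠ 0 := sub_ne_zero_of_ne hpr
  rcases eq_or_ne s 0 with rfl | hs
  · have ht : t ≠ 0 := hne rfl
    rw [zero_smul, zero_add] at hst
    rcases smul_eq_zero.mp hst with h | h
    · exact ht h
    · exact hv h
  · -- p - q = c • (p - r), c = s⁻¹ * (-t)
    set c : ℝ := s⁻¹ * (-t) with hc
    have h' : s • (p - q) = (-t) • (p - r) := by
      rw [neg_smul]; exact eq_neg_of_add_eq_zero_left hst
    have hcv : p - q = c • (p - r) := by
      calc p - q = s⁻¹ • (s • (p - q)) := by
            rw [smul_smul, inv_mul_cancel₀ hs, one_smul]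
        _ = s⁻¹ • ((-t) • (p - r)) := by rw [h']
        _ = c • (p - r) := by rw [smul_smul]
    have hc0 : c ≠ 0 := by
      intro h; rw [h, zero_smul] at hcv; exact hu hcv
    -- distance identities
    have d1 : ‖p‖ ^ 2 - ‖q‖ ^ 2 = 2 * ⟪b, p - q⟫ := by
      have e1 : ‖b - p‖ ^ 2 = ‖b - q‖ ^ 2 := by rw [← dist_eq_norm, ← dist_eq_norm, h1]
      rw [norm_sub_sq_real, norm_sub_sq_real] at e1
      rw [inner_sub_right]; linarith
    have d2 : ‖p‖ ^ 2 - ‖r‖ ^ 2 = 2 * ⟪b, p - r⟫ := by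
      have e2 : ‖b - p‖ ^ 2 = ‖b - r‖ ^ 2 := by rw [← dist_eq_norm, ← dist_eq_norm, h2]
      rw [norm_sub_sq_real, norm_sub_sq_real] at e2
      rw [inner_sub_right]; linarith
    have hq' : q = p - c • (p - r) := by rw [← hcv]; abel
    have hnq : ‖q‖ ^ 2 = ‖p‖ ^ 2 - 2 * (c * ⟪p, p - r⟫) + c ^ 2 * ‖p - r‖ ^ 2 := by
      rw [hq', norm_sub_sq_real, inner_smul_right, norm_smul, mul_pow]
      simp [Real.norm_eq_abs, sq_abs]
    have hnr : ‖p‖ ^ 2 - ‖r‖ ^ 2 = 2 * ⟪p, p - r⟫ - ‖p - r‖ ^ 2 := by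
      have : ‖p - r‖ ^ 2 = ‖p‖ ^ 2 - 2 * ⟪p, r⟫ + ‖r‖ ^ 2 := norm_sub_sq_real p r
      rw [inner_sub_right]; linarith [this, real_inner_self_eq_norm_sq p]
    have hbc : ⟪b, p - q⟫ = c * ⟪b, p - r⟫ := by rw [hcv, inner_smul_right]
    -- combine: c(c-1)‖p-r‖² = 0
    have key : c * (c - 1) * ‖p - r‖ ^ 2 = 0 := by
      linear_combination (-1 : ℝ) * d1 + c * d2 - hnq - c * hnr - 2 * hbc
    have hnv : ‖p - r‖ ^ 2 ≠ 0 := pow_ne_zero 2 (norm_ne_zero_iff.mpr hv)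
    have : c = 1 := by
      rcases mul_eq_zero.mp key with h | h
      · rcases mul_eq_zero.mp h with h' | h'
        · exact absurd h' hc0
        · linarith [h']
      · exact absurd h hnv
    rw [this, one_smul] at hcv
    exact hqr (sub_right_injective hcv)

/-- Perpendicular pairs in 3-space cannot both be independent. -/
lemma not_both_indep (u1 u2 v1 v2 : E3)
    (h11 : ⟪u1, v1⟫ = 0) (h12 : ⟪u1, v2⟫ = 0)
    (h21 : ⟪u2, v1⟫ = 0) (h22 : ⟪u2, v2⟫ = 0) :
    ¬ LinearIndependent ℝ ![u1, u2] ∨ ¬ LinearIndependent ℝ ![v1, v2] := by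
  by_contra h
  push_neg at h
  obtain ⟨hu, hv⟩ := h
  set V : Submodule ℝ E3 := Submodule.span ℝ (Set.range ![v1, v2]) with hV
  have hVrank : Module.finrank ℝ V = 2 := by
    rw [hV, finrank_span_eq_card hv]; simp
  have horth : ∀ i : Fin 2, (![u1, u2] i) ∈ Vᗮ := by
    intro i
    rw [Submodule.mem_orthogonal']
    intro x hx
    induction hx using Submodule.span_induction with
    | mem y hy =>
        obtain ⟨j, rfl⟩ := hy
        fin_cases i <;> fin_cases j <;>
          simpa using by first | exact h11 | exact h12 | exact h21 | exact h22
    | zero => exact inner_zero_right _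
    | add y z _ _ hy hz => rw [inner_add_right, hy, hz, add_zero]
    | smul a y _ hy => rw [inner_smul_right, hy, mul_zero]
  have hU : Submodule.span ℝ (Set.range ![u1, u2]) ≤ Vᗮ := by
    rw [Submodule.span_le]
    rintro x ⟨i, rfl⟩
    exact horth i
  have hUrank : Module.finrank ℝ (Submodule.span ℝ (Set.range ![u1, u2])) = 2 := by
    rw [finrank_span_eq_card hu]; simp
  have hVo : Module.finrank ℝ Vᗮ = 1 := by
    have := Submodule.finrank_add_finrank_orthogonal V
    rw [hVrank] at this
    have hE : Module.finrank ℝ E3 = 3 := finrank_euclideanSpace_fin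
    omega
  have := Submodule.finrank_mono hU
  omega

/-- Key geometric fact: in `ℝ³`, three distinct points have at most two common
points at distance `a` from all of them (stated as: any three such are not pairwise
distinct). -/
lemma geom_key (a : ℝ) (z1 z2 z3 : E3) (h12 : z1 ≠ z2) (h13 : z1 ≠ z3) (h23 : z2 ≠ z3)
    (w1 w2 w3 : E3)
    (d11 : dist z1 w1 = a) (d12 : dist z1 w2 = a) (d13 : dist z1 w3 = a)
    (d21 : dist z2 w1 = a) (d22 : dist z2 w2 = a) (d23 : dist z2 w3 = a)
    (d31 : dist z3 w1 = a) (d32 : dist z3 w2 = a) (d33 : dist z3 w3 = a) :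
    w1 = w2 ∨ w1 = w3 ∨ w2 = w3 := by
  by_contra h
  push_neg at h
  obtain ⟨hw12, hw13, hw23⟩ := h
  have o11 : ⟪w1 - w2, z1 - z2⟫ = 0 :=
    inner_diff_zero z1 z2 w1 w2 (by rw [d11, d12]) (by rw [d21, d22])
  have o12 : ⟪w1 - w2, z1 - z3⟫ = 0 :=
    inner_diff_zero z1 z3 w1 w2 (by rw [d11, d12]) (by rw [d31, d32])
  have o21 : ⟪w1 - w3, z1 - z2⟫ = 0 :=
    inner_diff_zero z1 z2 w1 w3 (by rw [d11, d13]) (by rw [d21, d23])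
  have o22 : ⟪w1 - w3, z1 - z3⟫ = 0 :=
    inner_diff_zero z1 z3 w1 w3 (by rw [d11, d13]) (by rw [d31, d33])
  rcases not_both_indep (w1 - w2) (w1 - w3) (z1 - z2) (z1 - z3) o11 o12 o21 o22 with hdep | hdep
  · exact equidist_not_dep z1 w1 w2 w3 hw12 hw13 hw23 (by rw [d11, d12]) (by rw [d11, d13]) hdep
  · exact equidist_not_dep w1 z1 z2 z3 h12 h13 h23
      (by rw [dist_comm w1 z1, dist_comm w1 z2, d11, d21])
      (by rw [dist_comm w1 z1, dist_comm w1 z3, d11, d31]) hdep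

def eN (a : ℝ) (x y : E3) : ℕ := if dist x y = a then 1 else 0

def ccount (P : Finset E3) (a : ℝ) (y y' : E3) : ℕ :=
  (P.filter fun x => dist x y = a ∧ dist x y' = a).card

def mcount (P : Finset E3) (a : ℝ) (x1 x2 x3 : E3) : ℕ :=
  (P.filter fun y => dist x1 y = a ∧ dist x2 y = a ∧ dist x3 y = a).card

lemma ccount_eq (P : Finset E3) (a : ℝ) (y y' : E3) :
    ccount P a y y' = ∑ x ∈ P, eN a x y * eN a x y' := by
  rw [ccount, Finset.card_filter]
  refine Finset.sum_congr rfl fun x _ => ?_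
  by_cases h1 : dist x y = a <;> by_cases h2 : dist x y' = a <;> simp [eN, h1, h2]

lemma mcount_eq (P : Finset E3) (a : ℝ) (x1 x2 x3 : E3) :
    mcount P a x1 x2 x3 = ∑ y ∈ P, eN a x1 y * (eN a x2 y * eN a x3 y) := by
  rw [mcount, Finset.card_filter]
  refine Finset.sum_congr rfl fun y _ => ?_
  by_cases h1 : dist x1 y = a <;> by_cases h2 : dist x2 y = a <;>
    by_cases h3 : dist x3 y = a <;> simp [eN, h1, h2, h3]

lemma mcount_le_two (P : Finset E3) (a : ℝ) {x1 x2 x3 : E3}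
    (h12 : x1 ≠ x2) (h13 : x1 ≠ x3) (h23 : x2 ≠ x3) : mcount P a x1 x2 x3 ≤ 2 := by
  by_contra h
  push_neg at h
  obtain ⟨t, hts, htc⟩ := Finset.exists_subset_card_eq h
  obtain ⟨w1, w2, w3, hw12, hw13, hw23, rfl⟩ := Finset.card_eq_three.mp htc
  have m1 := Finset.mem_filter.mp (hts (by simp : w1 ∈ ({w1, w2, w3} : Finset E3)))
  have m2 := Finset.mem_filter.mp (hts (by simp : w2 ∈ ({w1, w2, w3} : Finset E3)))
  have m3 := Finset.mem_filter.mp (hts (by simp : w3 ∈ ({w1, w2, w3} : Finset E3)))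
  have := geom_key a x1 x2 x3 h12 h13 h23 w1 w2 w3
    m1.2.1 m2.2.1 m3.2.1 m1.2.2.1 m2.2.2.1 m3.2.2.1 m1.2.2.2 m2.2.2.2 m3.2.2.2
  rcases this with h' | h' | h'
  · exact hw12 h'
  · exact hw13 h'
  · exact hw23 h'

lemma mcount_diag1 (P : Finset E3) (a : ℝ) (x1 x3 : E3) :
    mcount P a x1 x1 x3 = ccount P a x1 x3 := by
  rw [mcount, ccount]
  congr 1
  apply Finset.filter_congr
  intro y _
  constructor
  · rintro ⟨h1, -, h3⟩; exact ⟨by rwa [dist_comm], by rwa [dist_comm]⟩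
  · rintro ⟨h1, h3⟩
    exact ⟨by rwa [dist_comm], by rwa [dist_comm], by rwa [dist_comm]⟩

lemma mcount_diag2 (P : Finset E3) (a : ℝ) (x1 x2 : E3) :
    mcount P a x1 x2 x1 = ccount P a x1 x2 := by
  rw [mcount, ccount]
  congr 1
  apply Finset.filter_congr
  intro y _
  constructor
  · rintro ⟨h1, h2, -⟩; exact ⟨by rwa [dist_comm], by rwa [dist_comm]⟩
  · rintro ⟨h1, h2⟩
    exact ⟨by rwa [dist_comm], by rwa [dist_comm], by rwa [dist_comm]⟩

lemma mcount_diag3 (P : Finset E3) (a : ℝ) (x1 x2 : E3) :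
    mcount P a x1 x2 x2 = ccount P a x1 x2 := by
  rw [mcount, ccount]
  congr 1
  apply Finset.filter_congr
  intro y _
  constructor
  · rintro ⟨h1, h2, -⟩; exact ⟨by rwa [dist_comm], by rwa [dist_comm]⟩
  · rintro ⟨h1, h2⟩
    exact ⟨by rwa [dist_comm], by rwa [dist_comm], by rwa [dist_comm]⟩

lemma sum_mul_sum_product {β ι κ : Type*} [CommSemiring β] (s : Finset ι) (t : Finset κ)
    (g : ι → β) (h : κ → β) :
    (∑ x ∈ s, g x) * (∑ y ∈ t, h y) = ∑ p ∈ s ×ˢ t, g p.1 * h p.2 := by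
  rw [Finset.sum_mul_sum, ← Finset.sum_product' (f := fun x y => g x * h y)]

lemma sum_sq' {β ι : Type*} [CommSemiring β] (s : Finset ι) (g : ι → β) :
    (∑ x ∈ s, g x) ^ 2 = ∑ q ∈ s ×ˢ s, g q.1 * g q.2 := by
  rw [sq, sum_mul_sum_product]

lemma sum_cube {β ι : Type*} [CommSemiring β] (s : Finset ι) (g : ι → β) :
    (∑ x ∈ s, g x) ^ 3 = ∑ t ∈ s ×ˢ s ×ˢ s, g t.1 * (g t.2.1 * g t.2.2) := by
  calc (∑ x ∈ s, g x) ^ 3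
      = (∑ x ∈ s, g x) * ∑ p ∈ s ×ˢ s, g p.1 * g p.2 := by
        rw [← sum_mul_sum_product]; ring
    _ = ∑ t ∈ s ×ˢ s ×ˢ s, g t.1 * (g t.2.1 * g t.2.2) :=
        sum_mul_sum_product s (s ×ˢ s) g (fun p => g p.1 * g p.2)

lemma swap_identity (P : Finset E3) (a : ℝ) :
    ∑ q ∈ P ×ˢ P, (ccount P a q.1 q.2) ^ 3
      = ∑ t ∈ P ×ˢ P ×ˢ P, (mcount P a t.1 t.2.1 t.2.2) ^ 2 := by
  have lhs_eq : ∑ q ∈ P ×ˢ P, (ccount P a q.1 q.2) ^ 3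
      = ∑ q ∈ P ×ˢ P, ∑ t ∈ P ×ˢ P ×ˢ P,
          (eN a t.1 q.1 * (eN a t.2.1 q.1 * eN a t.2.2 q.1))
            * (eN a t.1 q.2 * (eN a t.2.1 q.2 * eN a t.2.2 q.2)) := by
    refine Finset.sum_congr rfl fun q _ => ?_
    rw [ccount_eq, sum_cube]
    refine Finset.sum_congr rfl fun t _ => ?_
    ring
  have rhs_eq : ∑ t ∈ P ×ˢ P ×ˢ P, (mcount P a t.1 t.2.1 t.2.2) ^ 2
      = ∑ t ∈ P ×ˢ P ×ˢ P, ∑ q ∈ P ×ˢ P,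
          (eN a t.1 q.1 * (eN a t.2.1 q.1 * eN a t.2.2 q.1))
            * (eN a t.1 q.2 * (eN a t.2.1 q.2 * eN a t.2.2 q.2)) := by
    refine Finset.sum_congr rfl fun t _ => ?_
    rw [mcount_eq, sum_sq']
  rw [lhs_eq, rhs_eq, Finset.sum_comm]

lemma triple_bound (P : Finset E3) (a : ℝ) :
    ∑ t ∈ P ×ˢ P ×ˢ P, (mcount P a t.1 t.2.1 t.2.2) ^ 2
      ≤ 4 * P.card ^ 3 + 3 * ∑ q ∈ P ×ˢ P, (ccount P a q.1 q.2) ^ 2 := by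
  have key : ∀ x1 x2 x3 : E3, (mcount P a x1 x2 x3) ^ 2
      ≤ (if x1 ≠ x2 ∧ x1 ≠ x3 ∧ x2 ≠ x3 then 4 else 0)
        + ((if x1 = x2 then (mcount P a x1 x2 x3) ^ 2 else 0)
          + (if x1 = x3 then (mcount P a x1 x2 x3) ^ 2 else 0)
          + (if x2 = x3 then (mcount P a x1 x2 x3) ^ 2 else 0)) := by
    intro x1 x2 x3
    by_cases h12 : x1 = x2
    · rw [if_neg (by simp [h12]), if_pos h12]; omega
    · by_cases h13 : x1 = x3
      · rw [if_neg (by simp [h13]), if_pos h13]; omega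
      · by_cases h23 : x2 = x3
        · rw [if_neg (by simp [h23]), if_pos h23]; omega
        · have hm : mcount P a x1 x2 x3 ≤ 2 := mcount_le_two P a h12 h13 h23
          have hm2 : mcount P a x1 x2 x3 ^ 2 ≤ 4 := by
            calc mcount P a x1 x2 x3 ^ 2 ≤ 2 ^ 2 := Nat.pow_le_pow_left hm 2
              _ = 4 := by norm_num
          rw [if_pos ⟨h12, h13, h23⟩, if_neg h12, if_neg h13, if_neg h23]
          omega
  have step1 : ∑ t ∈ P ×ˢ P ×ˢ P, (mcount P a t.1 t.2.1 t.2.2) ^ 2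
      ≤ (∑ t ∈ P ×ˢ P ×ˢ P, (if t.1 ≠ t.2.1 ∧ t.1 ≠ t.2.2 ∧ t.2.1 ≠ t.2.2 then 4 else 0))
        + ((∑ t ∈ P ×ˢ P ×ˢ P, if t.1 = t.2.1 then (mcount P a t.1 t.2.1 t.2.2) ^ 2 else 0)
          + (∑ t ∈ P ×ˢ P ×ˢ P, if t.1 = t.2.2 then (mcount P a t.1 t.2.1 t.2.2) ^ 2 else 0)
          + (∑ t ∈ P ×ˢ P ×ˢ P, if t.2.1 = t.2.2 then (mcount P a t.1 t.2.1 t.2.2) ^ 2 else 0)) := by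
    rw [← Finset.sum_add_distrib, ← Finset.sum_add_distrib, ← Finset.sum_add_distrib]
    exact Finset.sum_le_sum fun t _ => key t.1 t.2.1 t.2.2
  have hT1 : (∑ t ∈ P ×ˢ P ×ˢ P, (if t.1 ≠ t.2.1 ∧ t.1 ≠ t.2.2 ∧ t.2.1 ≠ t.2.2 then 4 else 0))
      ≤ 4 * P.card ^ 3 := by
    calc ∑ t ∈ P ×ˢ P ×ˢ P, (if t.1 ≠ t.2.1 ∧ t.1 ≠ t.2.2 ∧ t.2.1 ≠ t.2.2 then 4 else 0)
        ≤ ∑ _t ∈ P ×ˢ P ×ˢ P, 4 := Finset.sum_le_sum fun t _ => by split_ifs <;> omega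
      _ = 4 * P.card ^ 3 := by
        rw [Finset.sum_const, Finset.card_product, Finset.card_product, smul_eq_mul]; ring
  have hS2form : ∑ q ∈ P ×ˢ P, (ccount P a q.1 q.2) ^ 2
      = ∑ y ∈ P, ∑ y' ∈ P, (ccount P a y y') ^ 2 := by
    simp only [Finset.sum_product]
  have hT2 : (∑ t ∈ P ×ˢ P ×ˢ P, if t.1 = t.2.1 then (mcount P a t.1 t.2.1 t.2.2) ^ 2 else 0)
      ≤ ∑ q ∈ P ×ˢ P, (ccount P a q.1 q.2) ^ 2 := by
    rw [hS2form]
    simp only [Finset.sum_product]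
    calc ∑ x1 ∈ P, ∑ x2 ∈ P, ∑ x3 ∈ P, (if x1 = x2 then (mcount P a x1 x2 x3) ^ 2 else 0)
        = ∑ x1 ∈ P, ∑ x2 ∈ P, (if x1 = x2 then ∑ x3 ∈ P, (mcount P a x1 x2 x3) ^ 2 else 0) := by
          refine Finset.sum_congr rfl fun x1 _ => Finset.sum_congr rfl fun x2 _ => ?_
          by_cases h : x1 = x2
          · simp [h]
          · simp [h]
      _ = ∑ x1 ∈ P, (if x1 ∈ P then ∑ x3 ∈ P, (mcount P a x1 x1 x3) ^ 2 else 0) := by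
        refine Finset.sum_congr rfl fun x1 _ => ?_
        rw [Finset.sum_ite_eq]
      _ ≤ ∑ x1 ∈ P, ∑ x3 ∈ P, (mcount P a x1 x1 x3) ^ 2 :=
        Finset.sum_le_sum fun x1 hx1 => by rw [if_pos hx1]
      _ = ∑ y ∈ P, ∑ y' ∈ P, (ccount P a y y') ^ 2 := by
        refine Finset.sum_congr rfl fun x1 _ => Finset.sum_congr rfl fun x3 _ => ?_
        rw [mcount_diag1]
  have hT3 : (∑ t ∈ P ×ˢ P ×ˢ P, if t.1 = t.2.2 then (mcount P a t.1 t.2.1 t.2.2) ^ 2 else 0)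
      ≤ ∑ q ∈ P ×ˢ P, (ccount P a q.1 q.2) ^ 2 := by
    rw [hS2form]
    simp only [Finset.sum_product]
    calc ∑ x1 ∈ P, ∑ x2 ∈ P, ∑ x3 ∈ P, (if x1 = x3 then (mcount P a x1 x2 x3) ^ 2 else 0)
        = ∑ x1 ∈ P, ∑ x2 ∈ P, (if x1 ∈ P then (mcount P a x1 x2 x1) ^ 2 else 0) := by
          refine Finset.sum_congr rfl fun x1 _ => Finset.sum_congr rfl fun x2 _ => ?_
          rw [Finset.sum_ite_eq]
      _ ≤ ∑ x1 ∈ P, ∑ x2 ∈ P, (mcount P a x1 x2 x1) ^ 2 :=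
        Finset.sum_le_sum fun x1 hx1 => Finset.sum_le_sum fun x2 _ => by rw [if_pos hx1]
      _ = ∑ y ∈ P, ∑ y' ∈ P, (ccount P a y y') ^ 2 := by
        refine Finset.sum_congr rfl fun x1 _ => Finset.sum_congr rfl fun x2 _ => ?_
        rw [mcount_diag2]
  have hT4 : (∑ t ∈ P ×ˢ P ×ˢ P, if t.2.1 = t.2.2 then (mcount P a t.1 t.2.1 t.2.2) ^ 2 else 0)
      ≤ ∑ q ∈ P ×ˢ P, (ccount P a q.1 q.2) ^ 2 := by
    rw [hS2form]
    simp only [Finset.sum_product]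
    calc ∑ x1 ∈ P, ∑ x2 ∈ P, ∑ x3 ∈ P, (if x2 = x3 then (mcount P a x1 x2 x3) ^ 2 else 0)
        = ∑ x1 ∈ P, ∑ x2 ∈ P, (if x2 ∈ P then (mcount P a x1 x2 x2) ^ 2 else 0) := by
          refine Finset.sum_congr rfl fun x1 _ => Finset.sum_congr rfl fun x2 _ => ?_
          rw [Finset.sum_ite_eq]
      _ ≤ ∑ x1 ∈ P, ∑ x2 ∈ P, (mcount P a x1 x2 x2) ^ 2 :=
        Finset.sum_le_sum fun x1 _ => Finset.sum_le_sum fun x2 hx2 => by rw [if_pos hx2]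
      _ = ∑ y ∈ P, ∑ y' ∈ P, (ccount P a y y') ^ 2 := by
        refine Finset.sum_congr rfl fun x1 _ => Finset.sum_congr rfl fun x2 _ => ?_
        rw [mcount_diag3]
  omega

lemma cube_sum_bound (P : Finset E3) (a : ℝ) :
    ∑ q ∈ P ×ˢ P, (ccount P a q.1 q.2) ^ 3
      ≤ 4 * P.card ^ 3 + 3 * ∑ q ∈ P ×ˢ P, (ccount P a q.1 q.2) ^ 2 := by
  rw [swap_identity]; exact triple_bound P a

/-! ### Cauchy-Schwarz chain -/

def S2R (P : Finset E3) (a : ℝ) : ℝ := ∑ q ∈ P ×ˢ P, ((ccount P a q.1 q.2 : ℝ)) ^ 2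

lemma S2R_nonneg (P : Finset E3) (a : ℝ) : 0 ≤ S2R P a :=
  Finset.sum_nonneg fun _ _ => sq_nonneg _

lemma S2R_cube_bound (P : Finset E3) (a : ℝ) :
    (S2R P a) ^ 3 ≤ 46656 * (P.card : ℝ) ^ 8 := by
  set n : ℝ := (P.card : ℝ) with hn
  have hn0 : 0 ≤ n := Nat.cast_nonneg _
  set S1 : ℝ := ∑ q ∈ P ×ˢ P, ((ccount P a q.1 q.2 : ℝ)) with hS1
  set S3 : ℝ := ∑ q ∈ P ×ˢ P, ((ccount P a q.1 q.2 : ℝ)) ^ 3 with hS3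
  have hS1nn : 0 ≤ S1 := Finset.sum_nonneg fun _ _ => Nat.cast_nonneg _
  have hS3nn : 0 ≤ S3 := Finset.sum_nonneg fun _ _ => by positivity
  have hS2nn : 0 ≤ S2R P a := S2R_nonneg P a
  -- cast of the combinatorial bound
  have hS3b : S3 ≤ 4 * n ^ 3 + 3 * S2R P a := by
    have h := cube_sum_bound P a
    have h' : ((∑ q ∈ P ×ˢ P, (ccount P a q.1 q.2) ^ 3 : ℕ) : ℝ)
        ≤ ((4 * P.card ^ 3 + 3 * ∑ q ∈ P ×ˢ P, (ccount P a q.1 q.2) ^ 2 : ℕ) : ℝ) :=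
      Nat.cast_le.mpr h
    push_cast at h'
    rw [hS3, hn, S2R]
    convert h' using 2 <;> push_cast <;> ring
  -- Cauchy-Schwarz 1 : S1² ≤ n² S2
  have cs1 : S1 ^ 2 ≤ n ^ 2 * S2R P a := by
    have h := Finset.sum_mul_sq_le_sq_mul_sq (P ×ˢ P) (fun _ => (1 : ℝ))
      (fun q => (ccount P a q.1 q.2 : ℝ))
    simp only [one_mul, one_pow] at h
    rw [Finset.sum_const, nsmul_eq_mul, Finset.card_product] at h
    calc S1 ^ 2 ≤ (↑(P.card * P.card)) * 1 * ∑ q ∈ P ×ˢ P, ((ccount P a q.1 q.2 : ℝ)) ^ 2 := h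
      _ = n ^ 2 * S2R P a := by rw [S2R, hn]; push_cast; ring
  -- Cauchy-Schwarz 2 : S2² ≤ S1 S3
  have cs2 : (S2R P a) ^ 2 ≤ S1 * S3 := by
    have h := Finset.sum_mul_sq_le_sq_mul_sq (P ×ˢ P)
      (fun q => Real.sqrt (ccount P a q.1 q.2 : ℝ))
      (fun q => (ccount P a q.1 q.2 : ℝ) * Real.sqrt (ccount P a q.1 q.2 : ℝ))
    have e1 : ∀ q : E3 × E3, Real.sqrt (ccount P a q.1 q.2 : ℝ)
        * ((ccount P a q.1 q.2 : ℝ) * Real.sqrt (ccount P a q.1 q.2 : ℝ))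
        = ((ccount P a q.1 q.2 : ℝ)) ^ 2 := by
      intro q
      have hnn : (0:ℝ) ≤ (ccount P a q.1 q.2 : ℝ) := Nat.cast_nonneg _
      rw [show Real.sqrt (ccount P a q.1 q.2 : ℝ)
          * ((ccount P a q.1 q.2 : ℝ) * Real.sqrt (ccount P a q.1 q.2 : ℝ))
          = (ccount P a q.1 q.2 : ℝ) * (Real.sqrt (ccount P a q.1 q.2 : ℝ)
            * Real.sqrt (ccount P a q.1 q.2 : ℝ)) by ring, Real.mul_self_sqrt hnn, sq]
    have e2 : ∀ q : E3 × E3, (Real.sqrt (ccount P a q.1 q.2 : ℝ)) ^ 2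
        = (ccount P a q.1 q.2 : ℝ) := fun q => Real.sq_sqrt (Nat.cast_nonneg _)
    have e3 : ∀ q : E3 × E3, ((ccount P a q.1 q.2 : ℝ) * Real.sqrt (ccount P a q.1 q.2 : ℝ)) ^ 2
        = ((ccount P a q.1 q.2 : ℝ)) ^ 3 := by
      intro q
      rw [mul_pow, Real.sq_sqrt (Nat.cast_nonneg _)]
      ring
    rw [Finset.sum_congr rfl fun q _ => e1 q, Finset.sum_congr rfl fun q _ => e2 q,
      Finset.sum_congr rfl fun q _ => e3 q] at h
    exact h
  -- combine : S2³ ≤ n² S3²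
  have key : (S2R P a) ^ 3 ≤ n ^ 2 * S3 ^ 2 := by
    rcases eq_or_lt_of_le hS2nn with h0 | hpos
    · rw [← h0]
      norm_num
      positivity
    · have h4 : (S2R P a) ^ 4 ≤ S1 ^ 2 * S3 ^ 2 := by
        calc (S2R P a) ^ 4 = ((S2R P a) ^ 2) ^ 2 := by ring
          _ ≤ (S1 * S3) ^ 2 := pow_le_pow_left₀ (sq_nonneg _) cs2 2
          _ = S1 ^ 2 * S3 ^ 2 := by ring
      have h5 : S1 ^ 2 * S3 ^ 2 ≤ (n ^ 2 * S2R P a) * S3 ^ 2 :=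
        mul_le_mul_of_nonneg_right cs1 (sq_nonneg _)
      have h6 : (S2R P a) ^ 3 * (S2R P a) ≤ (n ^ 2 * S3 ^ 2) * (S2R P a) := by
        calc (S2R P a) ^ 3 * (S2R P a) = (S2R P a) ^ 4 := by ring
          _ ≤ (n ^ 2 * S2R P a) * S3 ^ 2 := le_trans h4 h5
          _ = (n ^ 2 * S3 ^ 2) * (S2R P a) := by ring
      exact le_of_mul_le_mul_right h6 hpos
  -- final case split
  by_cases hc : 3 * S2R P a ≤ 4 * n ^ 3
  · have hS3' : S3 ≤ 8 * n ^ 3 := by linarith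
    have : S3 ^ 2 ≤ (8 * n ^ 3) ^ 2 := pow_le_pow_left₀ hS3nn hS3' 2
    calc (S2R P a) ^ 3 ≤ n ^ 2 * S3 ^ 2 := key
      _ ≤ n ^ 2 * (8 * n ^ 3) ^ 2 := by nlinarith [sq_nonneg n]
      _ = 64 * n ^ 8 := by ring
      _ ≤ 46656 * n ^ 8 := by nlinarith [pow_nonneg hn0 8]
  · push_neg at hc
    have hS2pos : 0 < S2R P a := by nlinarith [pow_nonneg hn0 3]
    have hS3' : S3 ≤ 6 * S2R P a := by linarith
    have h7 : (S2R P a) ^ 3 ≤ 36 * n ^ 2 * (S2R P a) ^ 2 := by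
      have hsq3 : S3 ^ 2 ≤ 36 * (S2R P a) ^ 2 := by
        calc S3 ^ 2 ≤ (6 * S2R P a) ^ 2 := pow_le_pow_left₀ hS3nn hS3' 2
          _ = 36 * (S2R P a) ^ 2 := by ring
      calc (S2R P a) ^ 3 ≤ n ^ 2 * S3 ^ 2 := key
        _ ≤ n ^ 2 * (36 * (S2R P a) ^ 2) := mul_le_mul_of_nonneg_left hsq3 (sq_nonneg n)
        _ = 36 * n ^ 2 * (S2R P a) ^ 2 := by ring
    have h8 : S2R P a ≤ 36 * n ^ 2 := by
      have hsq : 0 < (S2R P a) ^ 2 := pow_pos hS2pos 2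
      have h7' : (S2R P a) * (S2R P a) ^ 2 ≤ (36 * n ^ 2) * (S2R P a) ^ 2 := by
        calc (S2R P a) * (S2R P a) ^ 2 = (S2R P a) ^ 3 := by ring
          _ ≤ 36 * n ^ 2 * (S2R P a) ^ 2 := h7
          _ = (36 * n ^ 2) * (S2R P a) ^ 2 := by ring
      exact le_of_mul_le_mul_right h7' hsq
    have hn1 : (1:ℝ) ≤ n := by
      have hcard : P.card ≠ 0 := by
        intro h0
        rw [hn, h0] at h8
        push_cast at h8
        linarith
      rw [hn]
      exact_mod_cast Nat.one_le_iff_ne_zero.mpr hcard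
    calc (S2R P a) ^ 3 ≤ (36 * n ^ 2) ^ 3 := pow_le_pow_left₀ hS2nn h8 3
      _ = 46656 * n ^ 6 := by ring
      _ ≤ 46656 * n ^ 8 := by
        have h9 : n ^ 6 ≤ n ^ 8 := pow_le_pow_right₀ hn1 (by norm_num)
        linarith

/-! ### The operator step bound -/

lemma step_bound (P : Finset E3) (a : ℝ) (f : E3 → ℝ) (hf : ∀ x, 0 ≤ f x) :
    ∑ x ∈ P, (∑ y ∈ P.filter fun y => dist x y = a, f y) ^ 2
      ≤ Real.sqrt (S2R P a) * ∑ y ∈ P, (f y) ^ 2 := by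
  have hfil : ∀ x : E3, ∑ y ∈ P.filter (fun y => dist x y = a), f y
      = ∑ y ∈ P, (eN a x y : ℝ) * f y := by
    intro x
    rw [Finset.sum_filter]
    refine Finset.sum_congr rfl fun y _ => ?_
    by_cases h : dist x y = a <;> simp [eN, h]
  have expand : ∑ x ∈ P, (∑ y ∈ P.filter fun y => dist x y = a, f y) ^ 2
      = ∑ q ∈ P ×ˢ P, (ccount P a q.1 q.2 : ℝ) * (f q.1 * f q.2) := by
    calc ∑ x ∈ P, (∑ y ∈ P.filter fun y => dist x y = a, f y) ^ 2
        = ∑ x ∈ P, ∑ q ∈ P ×ˢ P, ((eN a x q.1 : ℝ) * f q.1) * ((eN a x q.2 : ℝ) * f q.2) := by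
          refine Finset.sum_congr rfl fun x _ => ?_
          rw [hfil, sum_sq']
      _ = ∑ q ∈ P ×ˢ P, ∑ x ∈ P, ((eN a x q.1 : ℝ) * f q.1) * ((eN a x q.2 : ℝ) * f q.2) :=
          Finset.sum_comm
      _ = ∑ q ∈ P ×ˢ P, (ccount P a q.1 q.2 : ℝ) * (f q.1 * f q.2) := by
          refine Finset.sum_congr rfl fun q _ => ?_
          have hcc : (ccount P a q.1 q.2 : ℝ) = ∑ x ∈ P, (eN a x q.1 : ℝ) * (eN a x q.2 : ℝ) := by
            rw [ccount_eq]
            push_cast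
            rfl
          rw [hcc, Finset.sum_mul]
          refine Finset.sum_congr rfl fun x _ => ?_
          ring
  rw [expand]
  have hA : 0 ≤ ∑ q ∈ P ×ˢ P, (ccount P a q.1 q.2 : ℝ) * (f q.1 * f q.2) :=
    Finset.sum_nonneg fun q _ =>
      mul_nonneg (Nat.cast_nonneg _) (mul_nonneg (hf _) (hf _))
  have hB : 0 ≤ ∑ y ∈ P, (f y) ^ 2 := Finset.sum_nonneg fun y _ => sq_nonneg _
  have cs := Finset.sum_mul_sq_le_sq_mul_sq (P ×ˢ P)
    (fun q => (ccount P a q.1 q.2 : ℝ)) (fun q => f q.1 * f q.2)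
  have hBsq : ∑ q ∈ P ×ˢ P, (f q.1 * f q.2) ^ 2 = (∑ y ∈ P, (f y) ^ 2) ^ 2 := by
    rw [sum_sq']
    refine Finset.sum_congr rfl fun q _ => ?_
    ring
  rw [hBsq] at cs
  -- cs : A² ≤ S2R * B²
  calc ∑ q ∈ P ×ˢ P, (ccount P a q.1 q.2 : ℝ) * (f q.1 * f q.2)
      = Real.sqrt ((∑ q ∈ P ×ˢ P, (ccount P a q.1 q.2 : ℝ) * (f q.1 * f q.2)) ^ 2) :=
        (Real.sqrt_sq hA).symm
    _ ≤ Real.sqrt (S2R P a * (∑ y ∈ P, (f y) ^ 2) ^ 2) := Real.sqrt_le_sqrt cs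
    _ = Real.sqrt (S2R P a) * ∑ y ∈ P, (f y) ^ 2 := by
        rw [Real.sqrt_mul (S2R_nonneg P a), Real.sqrt_sq hB]

/-! ### Walks -/

def wf (P : Finset E3) : List ℝ → E3 → Finset (List E3)
  | [], _ => {[]}
  | a :: l, x =>
      (P.filter fun y => dist x y = a).biUnion fun y =>
        (wf P l y).map ⟨List.cons y, List.cons_injective⟩

def gw (P : Finset E3) (l : List ℝ) (x : E3) : ℝ := ((wf P l x).card : ℝ)

lemma gw_nonneg (P : Finset E3) (l : List ℝ) (x : E3) : 0 ≤ gw P l x :=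
  Nat.cast_nonneg _

lemma gw_nil (P : Finset E3) (x : E3) : gw P [] x = 1 := by simp [gw, wf]

lemma gw_rec (P : Finset E3) (a : ℝ) (l : List ℝ) (x : E3) :
    gw P (a :: l) x ≤ ∑ y ∈ P.filter fun y => dist x y = a, gw P l y := by
  have h1 : (wf P (a :: l) x).card
      ≤ ∑ y ∈ P.filter (fun y => dist x y = a), ((wf P l y).map
        (⟨List.cons y, List.cons_injective⟩ : List E3 ↪ List E3)).card :=
    Finset.card_biUnion_le
  simp only [Finset.card_map] at h1
  rw [gw]
  calc ((wf P (a :: l) x).card : ℝ)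
      ≤ ((∑ y ∈ P.filter (fun y => dist x y = a), (wf P l y).card : ℕ) : ℝ) :=
        Nat.cast_le.mpr h1
    _ = ∑ y ∈ P.filter fun y => dist x y = a, gw P l y := by
        push_cast [gw]
        rfl

lemma iter_bound (P : Finset E3) : ∀ l : List ℝ,
    ∑ x ∈ P, (gw P l x) ^ 2 ≤ (l.map fun a => Real.sqrt (S2R P a)).prod * P.card := by
  intro l
  induction l with
  | nil => simp [gw_nil]
  | cons a l ih =>
    calc ∑ x ∈ P, (gw P (a :: l) x) ^ 2
        ≤ ∑ x ∈ P, (∑ y ∈ P.filter fun y => dist x y = a, gw P l y) ^ 2 :=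
          Finset.sum_le_sum fun x _ =>
            pow_le_pow_left₀ (gw_nonneg P _ x) (gw_rec P a l x) 2
      _ ≤ Real.sqrt (S2R P a) * ∑ y ∈ P, (gw P l y) ^ 2 :=
          step_bound P a (gw P l) (gw_nonneg P l)
      _ ≤ Real.sqrt (S2R P a) * ((l.map fun a => Real.sqrt (S2R P a)).prod * P.card) :=
          mul_le_mul_of_nonneg_left ih (Real.sqrt_nonneg _)
      _ = ((a :: l).map fun a => Real.sqrt (S2R P a)).prod * P.card := by
          rw [List.map_cons, List.prod_cons]
          ring

/-! ### chains inject into walks -/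

lemma walk_mem (P : Finset E3) : ∀ (k : ℕ) (δ : Fin k → ℝ) (p : Fin (k+1) → E3),
    (∀ i, p i ∈ P) → (∀ j : Fin k, dist (p j.castSucc) (p j.succ) = δ j) →
    (List.ofFn fun j : Fin k => p j.succ) ∈ wf P (List.ofFn δ) (p 0) := by
  intro k
  induction k with
  | zero =>
    intro δ p _ _
    simp [wf, List.ofFn_zero]
  | succ k ih =>
    intro δ p hp hd
    rw [List.ofFn_succ (f := fun j : Fin (k+1) => p j.succ), List.ofFn_succ (f := δ)]
    simp only [wf, Finset.mem_biUnion, Finset.mem_filter, Finset.mem_map,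
      Function.Embedding.coeFn_mk]
    refine ⟨p (0 : Fin (k+1)).succ, ⟨hp _, ?_⟩,
      List.ofFn (fun i : Fin k => p i.succ.succ), ?_, rfl⟩
    · have h0 := hd 0
      rwa [Fin.castSucc_zero] at h0
    · have := ih (fun i => δ i.succ) (fun i => p i.succ) (fun i => hp i.succ) ?_
      · exact this
      · intro j
        have := hd j.succ
        rwa [← Fin.succ_castSucc] at this

lemma chain_le_walks (P : Finset E3) (k : ℕ) (δ : Fin k → ℝ) :
    (chainCount 3 k P δ : ℝ) ≤ ∑ x ∈ P, gw P (List.ofFn δ) x := by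
  classical
  set L := List.ofFn δ with hL
  set G : Finset (E3 × List E3) :=
    P.biUnion (fun x => (wf P L x).map ⟨fun l => (x, l), fun l1 l2 h => congrArg Prod.snd h⟩)
    with hG
  have hGcard : G.card ≤ ∑ x ∈ P, (wf P L x).card := by
    refine le_trans Finset.card_biUnion_le (le_of_eq ?_)
    refine Finset.sum_congr rfl fun x _ => ?_
    rw [Finset.card_map]
  have main : chainCount 3 k P δ ≤ ∑ x ∈ P, (wf P L x).card := by
    rw [chainCount]
    set S : Set (Fin (k+1) → E3) := {p : Fin (k + 1) → E3 |
      (∀ i, p i ∈ P) ∧ Function.Injective p ∧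
      ∀ j : Fin k, dist (p j.castSucc) (p j.succ) = δ j} with hS
    set φ : (Fin (k+1) → E3) → E3 × List E3 :=
      fun p => (p 0, List.ofFn fun j : Fin k => p j.succ) with hφ
    have hφinj : Function.Injective φ := by
      intro p q h
      have h0 : p 0 = q 0 := congrArg Prod.fst h
      have ht : (fun j : Fin k => p j.succ) = fun j => q j.succ :=
        List.ofFn_injective (congrArg Prod.snd h)
      funext i
      induction i using Fin.cases with
      | zero => exact h0
      | succ j => exact congrFun ht j
    have himg : φ '' S ⊆ ↑G := by
      rintro z ⟨p, hp, rfl⟩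
      obtain ⟨hmem, -, hdist⟩ := hp
      rw [Finset.mem_coe, hG, Finset.mem_biUnion]
      exact ⟨p 0, hmem 0, Finset.mem_map.mpr
        ⟨List.ofFn fun j : Fin k => p j.succ, walk_mem P k δ p hmem hdist, rfl⟩⟩
    calc S.ncard = (φ '' S).ncard := (Set.ncard_image_of_injective S hφinj).symm
      _ ≤ (↑G : Set (E3 × List E3)).ncard :=
          Set.ncard_le_ncard himg (G.finite_toSet)
      _ = G.card := Set.ncard_coe_finset G
      _ ≤ ∑ x ∈ P, (wf P L x).card := hGcard
  calc (chainCount 3 k P δ : ℝ)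
      ≤ ((∑ x ∈ P, (wf P L x).card : ℕ) : ℝ) := Nat.cast_le.mpr main
    _ = ∑ x ∈ P, gw P L x := by
        push_cast [gw]
        rfl

/-! ### list helpers -/

lemma list_prod_pow (l : List ℝ) (m : ℕ) : l.prod ^ m = (l.map (· ^ m)).prod := by
  induction l with
  | nil => simp
  | cons a l ih => simp [List.prod_cons, mul_pow, ih]

lemma list_prod_le (B : ℝ) (hB : 0 ≤ B) : ∀ l : List ℝ,
    (∀ x ∈ l, 0 ≤ x) → (∀ x ∈ l, x ≤ B) → l.prod ≤ B ^ l.length := by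
  intro l
  induction l with
  | nil => simp
  | cons a l ih =>
    intro h0 hb
    rw [List.prod_cons, List.length_cons, pow_succ']
    exact mul_le_mul (hb a (by simp)) (ih (fun x hx => h0 x (by simp [hx]))
      (fun x hx => hb x (by simp [hx])))
      (List.prod_nonneg fun x hx => h0 x (by simp [hx])) hB

/-! ### main bound for a fixed configuration -/

lemma config_bound (k : ℕ) (hmod : k % 3 = 0) (P : Finset E3) (δ : Fin k → ℝ) :
    (chainCount 3 k P δ : ℝ) ≤ (6:ℝ) ^ k * (P.card : ℝ) ^ (2 * k / 3 + 1) := by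
  set nR : ℝ := (P.card : ℝ) with hnR
  have hnR0 : 0 ≤ nR := Nat.cast_nonneg _
  set L : List ℝ := List.ofFn δ with hL
  set W : ℝ := ∑ x ∈ P, gw P L x with hW
  have hW0 : 0 ≤ W := Finset.sum_nonneg fun x _ => gw_nonneg P L x
  set prodM : ℝ := (L.map fun a => Real.sqrt (S2R P a)).prod with hprodM
  have hprodM0 : 0 ≤ prodM := by
    refine List.prod_nonneg fun x hx => ?_
    obtain ⟨a, -, rfl⟩ := List.mem_map.mp hx
    exact Real.sqrt_nonneg _
  -- Cauchy-Schwarz with the constant function 1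
  have cs := Finset.sum_mul_sq_le_sq_mul_sq P (gw P L) (fun _ => (1 : ℝ))
  simp only [mul_one, one_pow] at cs
  rw [Finset.sum_const, nsmul_eq_mul, mul_one] at cs
  -- cs : (∑ gw)² ≤ (∑ gw²) * P.card
  have hiter := iter_bound P L
  have hW2 : W ^ 2 ≤ nR ^ 2 * prodM := by
    calc W ^ 2 ≤ (∑ x ∈ P, (gw P L x) ^ 2) * nR := cs
      _ ≤ (prodM * nR) * nR := mul_le_mul_of_nonneg_right hiter hnR0
      _ = nR ^ 2 * prodM := by ring
  have h12 : W ^ 12 ≤ nR ^ 12 * prodM ^ 6 := by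
    calc W ^ 12 = (W ^ 2) ^ 6 := by ring
      _ ≤ (nR ^ 2 * prodM) ^ 6 := pow_le_pow_left₀ (sq_nonneg W) hW2 6
      _ = nR ^ 12 * prodM ^ 6 := by ring
  have hlen : L.length = k := by rw [hL, List.length_ofFn]
  have hprod6 : prodM ^ 6 ≤ (46656 * nR ^ 8) ^ k := by
    rw [hprodM, list_prod_pow, List.map_map]
    have hB : (0:ℝ) ≤ 46656 * nR ^ 8 := by positivity
    have := list_prod_le (46656 * nR ^ 8) hB (L.map ((· ^ 6) ∘ fun a => Real.sqrt (S2R P a)))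
      (fun x hx => by
        obtain ⟨a, -, rfl⟩ := List.mem_map.mp hx
        show (0:ℝ) ≤ (Real.sqrt (S2R P a)) ^ 6
        positivity)
      (fun x hx => by
        obtain ⟨a, -, rfl⟩ := List.mem_map.mp hx
        show (Real.sqrt (S2R P a)) ^ 6 ≤ 46656 * nR ^ 8
        have h1 : (Real.sqrt (S2R P a)) ^ 6 = (S2R P a) ^ 3 := by
          rw [show 6 = 2 * 3 by norm_num, pow_mul, Real.sq_sqrt (S2R_nonneg P a)]
        rw [h1, hnR]
        exact S2R_cube_bound P a)
    rwa [List.length_map, hlen] at this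
  have hfin : W ^ 12 ≤ ((6:ℝ) ^ k * nR ^ (2 * k / 3 + 1)) ^ 12 := by
    have he12 : (2 * k / 3 + 1) * 12 = 8 * k + 12 := by omega
    have hexp : ((6:ℝ) ^ k * nR ^ (2 * k / 3 + 1)) ^ 12
        = (6:ℝ) ^ (6 * k) * ((6:ℝ) ^ (6 * k) * nR ^ (8 * k + 12)) := by
      rw [mul_pow, ← pow_mul, ← pow_mul, he12]
      rw [show k * 12 = 6 * k + 6 * k by ring, pow_add]
      ring
    have h46656 : (46656 : ℝ) = 6 ^ 6 := by norm_num
    have hchain : W ^ 12 ≤ (6:ℝ) ^ (6 * k) * nR ^ (8 * k + 12) := by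
      calc W ^ 12 ≤ nR ^ 12 * prodM ^ 6 := h12
        _ ≤ nR ^ 12 * (46656 * nR ^ 8) ^ k :=
            mul_le_mul_of_nonneg_left hprod6 (by positivity)
        _ = (6:ℝ) ^ (6 * k) * nR ^ (8 * k + 12) := by
            rw [h46656, mul_pow, ← pow_mul, ← pow_mul]
            rw [show 8 * k + 12 = 12 + k * 8 by ring, pow_add]
            ring
    have h6k1 : (1:ℝ) ≤ (6:ℝ) ^ (6 * k) := one_le_pow₀ (by norm_num)
    calc W ^ 12 ≤ (6:ℝ) ^ (6 * k) * nR ^ (8 * k + 12) := hchain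
      _ ≤ (6:ℝ) ^ (6 * k) * ((6:ℝ) ^ (6 * k) * nR ^ (8 * k + 12)) :=
          mul_le_mul_of_nonneg_left
            (le_mul_of_one_le_left (pow_nonneg hnR0 _) h6k1)
            (pow_nonneg (by norm_num) _)
      _ = ((6:ℝ) ^ k * nR ^ (2 * k / 3 + 1)) ^ 12 := hexp.symm
  have hWfin : W ≤ (6:ℝ) ^ k * nR ^ (2 * k / 3 + 1) :=
    le_of_pow_le_pow_left₀ (by norm_num) (by positivity) hfin
  exact le_trans (chain_le_walks P k δ) hWfin

theorem chains_upper_R3_mod3_eq_0 (k : ℕ) (hk : 3 ≤ k) (hmod : k % 3 = 0) :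
    ∃ c : ℝ, 0 < c ∧ ∀ n : ℕ,
      (maxChains 3 k n : ℝ) ≤ c * (n : ℝ) ^ (2 * k / 3 + 1) := by
  refine ⟨(6:ℝ) ^ k, by positivity, fun n => ?_⟩
  have hsup : maxChains 3 k n ≤ 6 ^ k * n ^ (2 * k / 3 + 1) := by
    apply csSup_le'
    rintro m ⟨P, δ, hcard, -, rfl⟩
    have hreal := config_bound k hmod P δ
    rw [hcard] at hreal
    have hcast : (chainCount 3 k P δ : ℝ) ≤ ((6 ^ k * n ^ (2 * k / 3 + 1) : ℕ) : ℝ) := by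
      push_cast
      exact hreal
    exact_mod_cast hcast
  calc (maxChains 3 k n : ℝ)
      ≤ ((6 ^ k * n ^ (2 * k / 3 + 1) : ℕ) : ℝ) := Nat.cast_le.mpr hsup
    _ = (6:ℝ) ^ k * (n:ℝ) ^ (2 * k / 3 + 1) := by push_cast; ring

end
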